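/- arXiv:2409.03699 — 6 statements merged into one kernel-verified Lean document; each statement's English description precedes it below -/
import Mathlib

section
/- Let k ≥ 3 be an integer and let P = (C, A) be the palette with C = ℤ/(k−1)ℤ and A = {(x, y, z) ∈ C³ : x ≠ y, y ≠ z, and z ≠ x + 1 in ℤ/(k−1)ℤ}. Then the k-star S_k does not admit P. -/
/-- A 3-graph, given by its edge set `E` on vertex type `V`, admits the palette
with color set `C` and admissible triples `A` if there are a linear (strict total)
order on the vertices and a coloring of the unordered pairs of vertices such that
every edge, listed in increasing order, receives an admissible triple. -/
def AdmitsPalette {V α : Type} [DecidableEq V] (E : Set (Finset V))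
    (C : Set α) (A : Set (α × α × α)) : Prop :=
  ∃ r : V → V → Prop, IsStrictTotalOrder V r ∧
    ∃ φ : Sym2 V → α, (∀ p, φ p ∈ C) ∧
      ∀ u v w : V, r u v → r v w → ({u, v, w} : Finset V) ∈ E →
        (φ s(u, v), φ s(u, w), φ s(v, w)) ∈ A

/-- The edge set of the `k`-star `S_k`: vertices `0, 1, …, k` where `0` plays the
role of the center `u`, and `i.succ` that of `v_i`; edges are `{u, v_i, v_j}`. -/
def starEdges (k : ℕ) : Set (Finset (Fin (k + 1))) :=
  {e | ∃ i j : Fin k, i ≠ j ∧ e = {0, i.succ, j.succ}}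

/-- For `k ≥ 3`, the `k`-star does not admit the palette on `ℤ/(k−1)ℤ` whose
admissible triples are those `(x, y, z)` with `x ≠ y`, `y ≠ z` and `z ≠ x + 1`. -/
theorem star_not_admits_mod_palette (k : ℕ) (hk : 3 ≤ k) :
    ¬ AdmitsPalette (starEdges k) (Set.univ : Set (ZMod (k - 1)))
      {t : ZMod (k - 1) × ZMod (k - 1) × ZMod (k - 1) |
        t.1 ≠ t.2.1 ∧ t.2.1 ≠ t.2.2 ∧ t.2.2 ≠ t.1 + 1} := by
  classical
  rintro ⟨r, hr, φ, -, hE⟩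
  haveI : NeZero (k - 1) := ⟨by omega⟩
  haveI : IsStrictTotalOrder (Fin (k+1)) r := hr
  -- the key injection
  set f : Fin k → ZMod (k - 1) :=
    fun i => if r 0 i.succ then φ s(0, i.succ) else φ s(0, i.succ) + 1 with hfdef
  have hf : Function.Injective f := by
    intro i j hfij
    by_contra hij
    set a := Fin.succ i with ha
    set b := Fin.succ j with hb
    have hab : a ≠ b := fun h => hij (Fin.succ_injective _ h)
    have ha0 : a ≠ (0 : Fin (k+1)) := Fin.succ_ne_zero i
    have hb0 : b ≠ (0 : Fin (k+1)) := Fin.succ_ne_zero j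
    have hmemab : ({0, a, b} : Finset (Fin (k+1))) ∈ starEdges k := ⟨i, j, hij, rfl⟩
    have hmemba : ({0, b, a} : Finset (Fin (k+1))) ∈ starEdges k :=
      ⟨j, i, Ne.symm hij, rfl⟩
    rcases trichotomous_of r 0 a with h0a | h | hA0
    · rcases trichotomous_of r 0 b with h0b | h | hB0
      · -- both after the center
        have hfi : f i = φ s(0, a) := if_pos h0a
        have hfj : f j = φ s(0, b) := if_pos h0b
        rcases trichotomous_of r a b with hAB | h | hBA
        · have := (hE 0 a b h0a hAB hmemab).1
          exact this (by rw [← hfi, ← hfj, hfij])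
        · exact hab h
        · have := (hE 0 b a h0b hBA hmemba).1
          exact this (by rw [← hfi, ← hfj, hfij])
      · exact hb0 h.symm
      · -- a after, b before: b ≺ 0 ≺ a
        have hfi : f i = φ s(0, a) := if_pos h0a
        have hfj : f j = φ s(0, b) + 1 := if_neg (fun h' => (irrefl_of r 0) (trans_of r h' hB0))
        have hmem : ({b, 0, a} : Finset (Fin (k+1))) ∈ starEdges k := by
          have : ({b, 0, a} : Finset (Fin (k+1))) = {0, b, a} := by
            ext x; simp; tauto
          rw [this]; exact hmemba
        have := (hE b 0 a hB0 h0a hmem).2.2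
        rw [Sym2.eq_swap (a := b) (b := 0)] at this
        exact this (by rw [← hfi, ← hfj, hfij])
    · exact ha0 h.symm
    · rcases trichotomous_of r 0 b with h0b | h | hB0
      · -- a before, b after: a ≺ 0 ≺ b
        have hfi : f i = φ s(0, a) + 1 := if_neg (fun h' => (irrefl_of r 0) (trans_of r h' hA0))
        have hfj : f j = φ s(0, b) := if_pos h0b
        have hmem : ({a, 0, b} : Finset (Fin (k+1))) ∈ starEdges k := by
          have : ({a, 0, b} : Finset (Fin (k+1))) = {0, a, b} := by
            ext x; simp; tauto
          rw [this]; exact hmemab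
        have := (hE a 0 b hA0 h0b hmem).2.2
        rw [Sym2.eq_swap (a := a) (b := 0)] at this
        exact this (by rw [← hfi, ← hfj, hfij])
      · exact hb0 h.symm
      · -- both before the center
        have hfi : f i = φ s(0, a) + 1 := if_neg (fun h' => (irrefl_of r 0) (trans_of r h' hA0))
        have hfj : f j = φ s(0, b) + 1 := if_neg (fun h' => (irrefl_of r 0) (trans_of r h' hB0))
        have key : φ s(0, a) ≠ φ s(0, b) := by
          rcases trichotomous_of r a b with hAB | h | hBA
          · have hmem : ({a, b, 0} : Finset (Fin (k+1))) ∈ starEdges k := by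
              have : ({a, b, 0} : Finset (Fin (k+1))) = {0, a, b} := by
                ext x; simp; tauto
              rw [this]; exact hmemab
            have := (hE a b 0 hAB hB0 hmem).2.1
            rw [Sym2.eq_swap (a := a) (b := 0), Sym2.eq_swap (a := b) (b := 0)] at this
            exact this
          · exact absurd h hab
          · have hmem : ({b, a, 0} : Finset (Fin (k+1))) ∈ starEdges k := by
              have : ({b, a, 0} : Finset (Fin (k+1))) = {0, b, a} := by
                ext x; simp; tauto
              rw [this]; exact hmemba
            have := (hE b a 0 hBA hA0 hmem).2.1
            rw [Sym2.eq_swap (a := b) (b := 0), Sym2.eq_swap (a := a) (b := 0)] at this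
            exact this.symm
        apply key
        have : φ s(0, a) + 1 = φ s(0, b) + 1 := by rw [← hfi, ← hfj, hfij]
        exact add_right_cancel this
  have hcard := Fintype.card_le_of_injective f hf
  rw [Fintype.card_fin, ZMod.card] at hcard
  omega
end

section
/- Let P = (C, A) be a palette with |C| = n, let a ∈ C be a color, and suppose that the palette obtained from P by removing the color a, namely (C∖{a}, A ∩ (C∖{a})³), has density at most d(P) (i.e., |A ∩ (C∖{a})³| ≤ (n−1)³·d(P)). Then for all i ≠ j in {1,2,3}, e_{i,j}(a) ≥ 3·d(P) − 2, i.e., d_{i,j}(a) ≥ (3·d(P) − 2)·n. -/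
/-- A palette: a finite nonempty set of colors together with a set of
admissible ordered triples of colors. -/
structure Palette (α : Type) [DecidableEq α] where
  colors : Finset α
  nonempty : colors.Nonempty
  triples : Finset (α × α × α)
  triples_sub : triples ⊆ colors ×ˢ colors ×ˢ colors

/-- The density of a palette: `|A| / |C|³`. -/
noncomputable def Palette.density {α : Type} [DecidableEq α] (P : Palette α) : ℝ :=
  (P.triples.card : ℝ) / (P.colors.card : ℝ) ^ 3

/-- The pair `(a, b)` is `(i, j)`-good if some admissible triple has `i`-th
entry `a` and `j`-th entry `b`. -/
def Palette.Good {α : Type} [DecidableEq α] (P : Palette α) (i j : Fin 3)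
    (a b : α) : Prop :=
  ∃ t ∈ P.triples, ![t.1, t.2.1, t.2.2] i = a ∧ ![t.1, t.2.1, t.2.2] j = b

instance {α : Type} [DecidableEq α] (P : Palette α) (i j : Fin 3) (a : α) :
    DecidablePred (P.Good i j a) := fun b =>
  inferInstanceAs (Decidable
    (∃ t ∈ P.triples, ![t.1, t.2.1, t.2.2] i = a ∧ ![t.1, t.2.1, t.2.2] j = b))

/-- `d_{i,j}(a)`: the number of colors `b` such that `(a, b)` is `(i, j)`-good. -/
def Palette.dGood {α : Type} [DecidableEq α] (P : Palette α) (i j : Fin 3)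
    (a : α) : ℕ :=
  (P.colors.filter fun b => P.Good i j a b).card

lemma palette_core {α : Type} [DecidableEq α] (C : Finset α) (A : Finset (α × α × α))
    (hA : A ⊆ C ×ˢ C ×ˢ C) (a : α) (ha : a ∈ C)
    (hrem : ((A.filter fun t => t.1 ≠ a ∧ t.2.1 ≠ a ∧ t.2.2 ≠ a).card : ℝ) ≤
      ((C.card : ℝ) - 1) ^ 3 * ((A.card : ℝ) / (C.card : ℝ) ^ 3)) :
    (3 * ((A.card : ℝ) / (C.card : ℝ) ^ 3) - 2) * C.card ≤
      ((C.filter fun b => ∃ t ∈ A, t.1 = a ∧ t.2.1 = b).card : ℝ) := by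
  classical
  set n := C.card with hn_def
  have hn : 0 < n := Finset.card_pos.2 ⟨a, ha⟩
  set G := C.filter fun b => ∃ t ∈ A, t.1 = a ∧ t.2.1 = b with hG_def
  set R := A.filter fun t => t.1 ≠ a ∧ t.2.1 ≠ a ∧ t.2.2 ≠ a with hR_def
  set B := A.filter fun t => t.1 = a with hB_def
  set X := A.filter fun t => t.1 ≠ a ∧ (t.2.1 = a ∨ t.2.2 = a) with hX_def
  -- split
  have hsplit : A.card ≤ R.card + B.card + X.card := by
    have hsub : A ⊆ (R ∪ B) ∪ X := by
      intro t ht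
      simp only [hR_def, hB_def, hX_def, Finset.mem_union, Finset.mem_filter, ht, true_and]
      tauto
    calc A.card ≤ ((R ∪ B) ∪ X).card := Finset.card_le_card hsub
      _ ≤ (R ∪ B).card + X.card := Finset.card_union_le _ _
      _ ≤ R.card + B.card + X.card := by
          have := Finset.card_union_le R B; omega
  -- B bound
  have hB : B.card ≤ G.card * n := by
    have hle : B.card ≤ (G ×ˢ C).card := by
      refine Finset.card_le_card_of_injOn (fun t : α × α × α => (t.2.1, t.2.2)) ?_ ?_
      · intro t ht
        obtain ⟨htA, ht1⟩ := Finset.mem_filter.1 ht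
        have hm := hA htA
        simp only [Finset.mem_product] at hm
        simp only [Finset.mem_coe, Finset.mem_product, hG_def, Finset.mem_filter]
        exact ⟨⟨hm.2.1, ⟨t, htA, ht1, rfl⟩⟩, hm.2.2⟩
      · intro t ht t' ht' h
        rw [Finset.mem_coe] at ht ht'
        have e1 := (Finset.mem_filter.1 ht).2
        have e2 := (Finset.mem_filter.1 ht').2
        simp only [Prod.mk.injEq] at h
        exact Prod.ext (e1.trans e2.symm) (Prod.ext h.1 h.2)
    simpa [Finset.card_product] using hle
  -- X bound
  have hX : X.card ≤ (n - 1) * (2 * n - 1) := by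
    set S := ({a} ×ˢ C) ∪ (C ×ˢ ({a} : Finset α)) with hS_def
    have hXsub : X ⊆ (C.erase a) ×ˢ S := by
      intro t ht
      simp only [hX_def, Finset.mem_filter] at ht
      obtain ⟨htA, ht1, ht2⟩ := ht
      have hm := hA htA
      simp only [Finset.mem_product] at hm
      simp only [Finset.mem_product, Finset.mem_erase, hS_def, Finset.mem_union,
        Finset.mem_singleton]
      refine ⟨⟨ht1, hm.1⟩, ?_⟩
      rcases ht2 with h | h
      · exact Or.inl ⟨h, hm.2.2⟩
      · exact Or.inr ⟨hm.2.1, h⟩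
    have hScard : S.card ≤ 2 * n - 1 := by
      have h1 := Finset.card_union_add_card_inter ({a} ×ˢ C) (C ×ˢ ({a} : Finset α))
      have h2 : (a, a) ∈ ({a} ×ˢ C) ∩ (C ×ˢ ({a} : Finset α)) := by
        simp [Finset.mem_product, ha]
      have h3 : 1 ≤ (({a} ×ˢ C) ∩ (C ×ˢ ({a} : Finset α))).card :=
        Finset.card_pos.2 ⟨_, h2⟩
      rw [← hS_def] at h1
      simp only [Finset.card_product, Finset.card_singleton, one_mul, mul_one] at h1
      omega
    calc X.card ≤ ((C.erase a) ×ˢ S).card := Finset.card_le_card hXsub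
      _ = (n - 1) * S.card := by rw [Finset.card_product, Finset.card_erase_of_mem ha]
      _ ≤ (n - 1) * (2 * n - 1) := Nat.mul_le_mul_left _ hScard
  -- arithmetic
  have hAcard : (A.card : ℝ) ≤ (n : ℝ) ^ 3 := by
    have := Finset.card_le_card hA
    simp only [Finset.card_product] at this
    calc (A.card : ℝ) ≤ ((n * (n * n) : ℕ) : ℝ) := by exact_mod_cast this
      _ = (n : ℝ) ^ 3 := by push_cast; ring
  have hnR : (1 : ℝ) ≤ (n : ℝ) := by exact_mod_cast hn
  have hn3 : (0 : ℝ) < (n : ℝ) ^ 3 := by positivity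
  set d : ℝ := (A.card : ℝ) / (n : ℝ) ^ 3 with hd_def
  have hdn : d * (n : ℝ) ^ 3 = A.card := div_mul_cancel₀ _ (ne_of_gt hn3)
  have hd1 : d ≤ 1 := by rw [hd_def, div_le_one hn3]; exact hAcard
  have hd0 : 0 ≤ d := by positivity
  have hXR : (X.card : ℝ) ≤ ((n : ℝ) - 1) * (2 * (n : ℝ) - 1) := by
    calc (X.card : ℝ) ≤ (((n - 1) * (2 * n - 1) : ℕ) : ℝ) := by exact_mod_cast hX
      _ = ((n : ℝ) - 1) * (2 * (n : ℝ) - 1) := by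
          push_cast [Nat.cast_sub hn, Nat.cast_sub (by omega : 1 ≤ 2 * n)]; ring
  have hBR : (B.card : ℝ) ≤ (G.card : ℝ) * n := by exact_mod_cast hB
  have hsplitR : (A.card : ℝ) ≤ (R.card : ℝ) + B.card + X.card := by exact_mod_cast hsplit
  have key : d * (n : ℝ) ^ 3 ≤ ((n : ℝ) - 1) ^ 3 * d + (G.card : ℝ) * n
      + ((n : ℝ) - 1) * (2 * (n : ℝ) - 1) := by
    rw [hdn]; linarith
  have slack : (0 : ℝ) ≤ (3 * (n : ℝ) - 1) * (1 - d) := by nlinarith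
  nlinarith [key, slack, mul_pos (by linarith : (0:ℝ) < (n:ℝ)) (by linarith : (0:ℝ) < (n:ℝ))]

lemma palette_core_perm {α : Type} [DecidableEq α] (C : Finset α) (A : Finset (α × α × α))
    (hA : A ⊆ C ×ˢ C ×ˢ C) (a : α) (ha : a ∈ C)
    (f : α × α × α → α × α × α) (hinj : Function.Injective f)
    (hc : ∀ t ∈ A, (f t).1 ∈ C ∧ (f t).2.1 ∈ C ∧ (f t).2.2 ∈ C)
    (hne : ∀ t : α × α × α,
      ((f t).1 ≠ a ∧ (f t).2.1 ≠ a ∧ (f t).2.2 ≠ a) ↔ (t.1 ≠ a ∧ t.2.1 ≠ a ∧ t.2.2 ≠ a))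
    (hrem : ((A.filter fun t => t.1 ≠ a ∧ t.2.1 ≠ a ∧ t.2.2 ≠ a).card : ℝ) ≤
      ((C.card : ℝ) - 1) ^ 3 * ((A.card : ℝ) / (C.card : ℝ) ^ 3)) :
    (3 * ((A.card : ℝ) / (C.card : ℝ) ^ 3) - 2) * C.card ≤
      ((C.filter fun b => ∃ t ∈ A, (f t).1 = a ∧ (f t).2.1 = b).card : ℝ) := by
  classical
  have hcardim : (A.image f).card = A.card := Finset.card_image_of_injective _ hinj
  have hsub : A.image f ⊆ C ×ˢ C ×ˢ C := by
    intro t ht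
    obtain ⟨u, hu, rfl⟩ := Finset.mem_image.1 ht
    have := hc u hu
    simp only [Finset.mem_product]
    exact this
  have hfilt : ((A.image f).filter fun t => t.1 ≠ a ∧ t.2.1 ≠ a ∧ t.2.2 ≠ a).card
      = (A.filter fun t => t.1 ≠ a ∧ t.2.1 ≠ a ∧ t.2.2 ≠ a).card := by
    rw [Finset.filter_image, Finset.card_image_of_injective _ hinj]
    congr 1
    exact Finset.filter_congr fun t _ => hne t
  have hgood : (C.filter fun b => ∃ t ∈ A.image f, t.1 = a ∧ t.2.1 = b)
      = (C.filter fun b => ∃ t ∈ A, (f t).1 = a ∧ (f t).2.1 = b) := by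
    apply Finset.filter_congr
    intro b _
    simp only [Finset.mem_image]
    constructor
    · rintro ⟨t, ⟨u, hu, rfl⟩, h⟩; exact ⟨u, hu, h⟩
    · rintro ⟨u, hu, h⟩; exact ⟨f u, ⟨u, hu, rfl⟩, h⟩
  have := palette_core C (A.image f) hsub a ha (by rw [hfilt, hcardim]; exact hrem)
  rwa [hcardim, hgood] at this

/-- If removing the color `a` from the palette `P` does not increase the density,
then `d_{i,j}(a) ≥ (3·d(P) − 2)·n` for all `i ≠ j`. -/
theorem dGood_lower_bound {α : Type} [DecidableEq α] (P : Palette α)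
    (a : α) (ha : a ∈ P.colors)
    (hrem : ((P.triples.filter fun t => t.1 ≠ a ∧ t.2.1 ≠ a ∧ t.2.2 ≠ a).card : ℝ) ≤
      ((P.colors.card : ℝ) - 1) ^ 3 * P.density) :
    ∀ i j : Fin 3, i ≠ j →
      (3 * P.density - 2) * (P.colors.card : ℝ) ≤ (P.dGood i j a : ℝ) := by
  intro i j hij
  have hrem' : ((P.triples.filter fun t => t.1 ≠ a ∧ t.2.1 ≠ a ∧ t.2.2 ≠ a).card : ℝ) ≤
      ((P.colors.card : ℝ) - 1) ^ 3 *
        ((P.triples.card : ℝ) / (P.colors.card : ℝ) ^ 3) := hrem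
  have hmem : ∀ t ∈ P.triples, t.1 ∈ P.colors ∧ t.2.1 ∈ P.colors ∧ t.2.2 ∈ P.colors := by
    intro t ht
    have h := P.triples_sub ht
    simpa only [Finset.mem_product] using h
  fin_cases i <;> fin_cases j <;>
    simp only [Palette.dGood, Palette.Good, Palette.density, Fin.isValue,
      Matrix.cons_val_zero, Matrix.cons_val_one, Matrix.head_cons,
      Matrix.cons_val_two, Matrix.tail_cons] at hij ⊢
  · exact absurd rfl hij
  · -- (0,1)
    exact palette_core_perm P.colors P.triples P.triples_sub a ha id (fun x y h => h)
      hmem (fun t => Iff.rfl) hrem'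
  · -- (0,2)
    exact palette_core_perm P.colors P.triples P.triples_sub a ha
      (fun t => (t.1, t.2.2, t.2.1))
      (Function.LeftInverse.injective (g := fun t => (t.1, t.2.2, t.2.1)) fun t => rfl)
      (fun t ht => by obtain ⟨h1, h2, h3⟩ := hmem t ht; exact ⟨h1, h3, h2⟩)
      (fun t => ⟨fun h => ⟨h.1, h.2.2, h.2.1⟩, fun h => ⟨h.1, h.2.2, h.2.1⟩⟩) hrem'
  · -- (1,0)
    exact palette_core_perm P.colors P.triples P.triples_sub a ha
      (fun t => (t.2.1, t.1, t.2.2))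
      (Function.LeftInverse.injective (g := fun t => (t.2.1, t.1, t.2.2)) fun t => rfl)
      (fun t ht => by obtain ⟨h1, h2, h3⟩ := hmem t ht; exact ⟨h2, h1, h3⟩)
      (fun t => ⟨fun h => ⟨h.2.1, h.1, h.2.2⟩, fun h => ⟨h.2.1, h.1, h.2.2⟩⟩) hrem'
  · exact absurd rfl hij
  · -- (1,2)
    exact palette_core_perm P.colors P.triples P.triples_sub a ha
      (fun t => (t.2.1, t.2.2, t.1))
      (Function.LeftInverse.injective (g := fun t => (t.2.2, t.1, t.2.1)) fun t => rfl)
      (fun t ht => by obtain ⟨h1, h2, h3⟩ := hmem t ht; exact ⟨h2, h3, h1⟩)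
      (fun t => ⟨fun h => ⟨h.2.2, h.1, h.2.1⟩, fun h => ⟨h.2.1, h.2.2, h.1⟩⟩) hrem'
  · -- (2,0)
    exact palette_core_perm P.colors P.triples P.triples_sub a ha
      (fun t => (t.2.2, t.1, t.2.1))
      (Function.LeftInverse.injective (g := fun t => (t.2.1, t.2.2, t.1)) fun t => rfl)
      (fun t ht => by obtain ⟨h1, h2, h3⟩ := hmem t ht; exact ⟨h3, h1, h2⟩)
      (fun t => ⟨fun h => ⟨h.2.1, h.2.2, h.1⟩, fun h => ⟨h.2.2, h.1, h.2.1⟩⟩) hrem'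
  · -- (2,1)
    exact palette_core_perm P.colors P.triples P.triples_sub a ha
      (fun t => (t.2.2, t.2.1, t.1))
      (Function.LeftInverse.injective (g := fun t => (t.2.2, t.2.1, t.1)) fun t => rfl)
      (fun t ht => by obtain ⟨h1, h2, h3⟩ := hmem t ht; exact ⟨h3, h2, h1⟩)
      (fun t => ⟨fun h => ⟨h.2.2, h.2.1, h.1⟩, fun h => ⟨h.2.2, h.2.1, h.1⟩⟩) hrem'
  · exact absurd rfl hij
end

section
/- For every palette P = (C, A) with |C| = n, the density satisfies d(P) ≤ 1/4 + (1/(2n)) · Σ_{a ∈ C} Σ_{(i,j): i ≠ j ∈ {1,2,3}} (e_{i,j}(a) − 1/2)², where the inner sum ranges over all six ordered pairs of distinct indices (i, j). -/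
open Finset

section Tri
variable {α : Type} (C : Finset α)

lemma tri_T1 (g : α → α → ℝ) :
    (∑ a ∈ C, ∑ b ∈ C, ∑ _c ∈ C, (1 - g a b))
      = (C.card : ℝ) * ∑ a ∈ C, ∑ b ∈ C, (1 - g a b) := by
  simp only [Finset.sum_const, nsmul_eq_mul, ← Finset.mul_sum]

lemma tri_T2 (g : α → α → ℝ) :
    (∑ a ∈ C, ∑ _b ∈ C, ∑ c ∈ C, (1 - g a c))
      = (C.card : ℝ) * ∑ a ∈ C, ∑ b ∈ C, (1 - g a b) := by
  simp only [Finset.sum_const, nsmul_eq_mul, ← Finset.mul_sum]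

lemma tri_T3 (g : α → α → ℝ) :
    (∑ _a ∈ C, ∑ b ∈ C, ∑ c ∈ C, (1 - g b c))
      = (C.card : ℝ) * ∑ a ∈ C, ∑ b ∈ C, (1 - g a b) := by
  simp only [Finset.sum_const, nsmul_eq_mul]

lemma tri_T4 (g g' : α → α → ℝ) :
    (∑ a ∈ C, ∑ b ∈ C, ∑ c ∈ C, (1 - g a b) * (1 - g' a c))
      = ∑ a ∈ C, (∑ b ∈ C, (1 - g a b)) * (∑ b ∈ C, (1 - g' a b)) := by
  refine Finset.sum_congr rfl fun a _ => ?_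
  simp only [← Finset.mul_sum, ← Finset.sum_mul]

lemma tri_T5 (g g' : α → α → ℝ) :
    (∑ a ∈ C, ∑ b ∈ C, ∑ c ∈ C, (1 - g a b) * (1 - g' b c))
      = ∑ a ∈ C, (∑ b ∈ C, (1 - g b a)) * (∑ b ∈ C, (1 - g' a b)) := by
  simp only [← Finset.mul_sum]
  rw [Finset.sum_comm]
  simp only [← Finset.sum_mul]

lemma tri_T6 (g g' : α → α → ℝ) :
    (∑ a ∈ C, ∑ b ∈ C, ∑ c ∈ C, (1 - g a c) * (1 - g' b c))
      = ∑ a ∈ C, (∑ b ∈ C, (1 - g b a)) * (∑ b ∈ C, (1 - g' b a)) := by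
  have h1 : ∀ a ∈ C, (∑ b ∈ C, ∑ c ∈ C, (1 - g a c) * (1 - g' b c))
      = ∑ c ∈ C, (1 - g a c) * (∑ b ∈ C, (1 - g' b c)) := by
    intro a _
    rw [Finset.sum_comm]
    simp only [← Finset.mul_sum]
  rw [Finset.sum_congr rfl h1, Finset.sum_comm]
  simp only [← Finset.sum_mul]

lemma tri_bound (g1 g2 g3 : α → α → ℝ)
    (hg1 : ∀ a b, 0 ≤ g1 a b ∧ g1 a b ≤ 1)
    (hg2 : ∀ a b, 0 ≤ g2 a b ∧ g2 a b ≤ 1)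
    (hg3 : ∀ a b, 0 ≤ g3 a b ∧ g3 a b ≤ 1) :
    (∑ a ∈ C, ∑ b ∈ C, ∑ c ∈ C, g1 a b * g2 a c * g3 b c) + 1 / 2 * ∑ a ∈ C,
      ((∑ b ∈ C, g1 a b) * ((C.card : ℝ) - ∑ b ∈ C, g1 a b)
        + (∑ b ∈ C, g1 b a) * ((C.card : ℝ) - ∑ b ∈ C, g1 b a)
        + (∑ b ∈ C, g2 a b) * ((C.card : ℝ) - ∑ b ∈ C, g2 a b)
        + (∑ b ∈ C, g2 b a) * ((C.card : ℝ) - ∑ b ∈ C, g2 b a)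
        + (∑ b ∈ C, g3 a b) * ((C.card : ℝ) - ∑ b ∈ C, g3 a b)
        + (∑ b ∈ C, g3 b a) * ((C.card : ℝ) - ∑ b ∈ C, g3 b a))
      ≤ (C.card : ℝ) ^ 3 := by
  set n : ℝ := (C.card : ℝ) with hn
  -- Step 1: pointwise bound on the triangle summand
  have step1 : (∑ a ∈ C, ∑ b ∈ C, ∑ c ∈ C, g1 a b * g2 a c * g3 b c)
      ≤ ∑ a ∈ C, ∑ b ∈ C, ∑ c ∈ C,
        (1 - (1 - g1 a b) - (1 - g2 a c) - (1 - g3 b c)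
          + (1 - g1 a b) * (1 - g2 a c) + (1 - g1 a b) * (1 - g3 b c)
          + (1 - g2 a c) * (1 - g3 b c)) := by
    refine Finset.sum_le_sum fun a _ => Finset.sum_le_sum fun b _ =>
      Finset.sum_le_sum fun c _ => ?_
    have h1 := hg1 a b; have h2 := hg2 a c; have h3 := hg3 b c
    nlinarith [mul_nonneg (mul_nonneg (sub_nonneg.2 h1.2) (sub_nonneg.2 h2.2))
      (sub_nonneg.2 h3.2)]
  -- Step 2: split into seven sums
  have split : (∑ a ∈ C, ∑ b ∈ C, ∑ c ∈ C,
        (1 - (1 - g1 a b) - (1 - g2 a c) - (1 - g3 b c)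
          + (1 - g1 a b) * (1 - g2 a c) + (1 - g1 a b) * (1 - g3 b c)
          + (1 - g2 a c) * (1 - g3 b c)))
      = (∑ a ∈ C, ∑ b ∈ C, ∑ c ∈ C, (1:ℝ))
        - (∑ a ∈ C, ∑ b ∈ C, ∑ c ∈ C, (1 - g1 a b))
        - (∑ a ∈ C, ∑ b ∈ C, ∑ c ∈ C, (1 - g2 a c))
        - (∑ a ∈ C, ∑ b ∈ C, ∑ c ∈ C, (1 - g3 b c))
        + (∑ a ∈ C, ∑ b ∈ C, ∑ c ∈ C, (1 - g1 a b) * (1 - g2 a c))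
        + (∑ a ∈ C, ∑ b ∈ C, ∑ c ∈ C, (1 - g1 a b) * (1 - g3 b c))
        + (∑ a ∈ C, ∑ b ∈ C, ∑ c ∈ C, (1 - g2 a c) * (1 - g3 b c)) := by
    simp only [← Finset.sum_sub_distrib, ← Finset.sum_add_distrib]
  have T0 : (∑ _a ∈ C, ∑ _b ∈ C, ∑ _c ∈ C, (1:ℝ)) = n ^ 3 := by
    simp [Finset.sum_const, nsmul_eq_mul]; ring
  -- row/column sum facts
  have hq : ∀ (g : α → α → ℝ) (a : α),
      ∑ b ∈ C, (1 - g a b) = n - ∑ b ∈ C, g a b := by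
    intro g a; rw [Finset.sum_sub_distrib]; simp [hn]
  have hq' : ∀ (g : α → α → ℝ) (a : α),
      ∑ b ∈ C, (1 - g b a) = n - ∑ b ∈ C, g b a := by
    intro g a; rw [Finset.sum_sub_distrib]; simp [hn]
  -- commutation facts
  have hc1 : (∑ a ∈ C, ∑ b ∈ C, (1 - g1 a b)) = ∑ a ∈ C, ∑ b ∈ C, (1 - g1 b a) :=
    Finset.sum_comm
  have hc2 : (∑ a ∈ C, ∑ b ∈ C, (1 - g2 a b)) = ∑ a ∈ C, ∑ b ∈ C, (1 - g2 b a) :=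
    Finset.sum_comm
  have hc3 : (∑ a ∈ C, ∑ b ∈ C, (1 - g3 a b)) = ∑ a ∈ C, ∑ b ∈ C, (1 - g3 b a) :=
    Finset.sum_comm
  -- master pointwise inequality, summed
  have master : ∑ a ∈ C,
      ((∑ b ∈ C, (1 - g1 a b)) * (∑ b ∈ C, (1 - g2 a b))
        + (∑ b ∈ C, (1 - g1 b a)) * (∑ b ∈ C, (1 - g3 a b))
        + (∑ b ∈ C, (1 - g2 b a)) * (∑ b ∈ C, (1 - g3 b a))
        + 1 / 2 * ((∑ b ∈ C, g1 a b) * (n - ∑ b ∈ C, g1 a b)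
          + (∑ b ∈ C, g1 b a) * (n - ∑ b ∈ C, g1 b a)
          + (∑ b ∈ C, g2 a b) * (n - ∑ b ∈ C, g2 a b)
          + (∑ b ∈ C, g2 b a) * (n - ∑ b ∈ C, g2 b a)
          + (∑ b ∈ C, g3 a b) * (n - ∑ b ∈ C, g3 a b)
          + (∑ b ∈ C, g3 b a) * (n - ∑ b ∈ C, g3 b a)))
      ≤ ∑ a ∈ C, (n / 2 * ((∑ b ∈ C, (1 - g1 a b)) + (∑ b ∈ C, (1 - g1 b a))
          + (∑ b ∈ C, (1 - g2 a b)) + (∑ b ∈ C, (1 - g2 b a))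
          + (∑ b ∈ C, (1 - g3 a b)) + (∑ b ∈ C, (1 - g3 b a)))) := by
    refine Finset.sum_le_sum fun a _ => ?_
    rw [hq g1 a, hq' g1 a, hq g2 a, hq' g2 a, hq g3 a, hq' g3 a]
    nlinarith [sq_nonneg ((∑ b ∈ C, g1 a b) - (∑ b ∈ C, g2 a b)),
      sq_nonneg ((∑ b ∈ C, g1 b a) - (∑ b ∈ C, g3 a b)),
      sq_nonneg ((∑ b ∈ C, g2 b a) - (∑ b ∈ C, g3 b a))]
  -- split master's two sides
  have mL : ∑ a ∈ C,
      ((∑ b ∈ C, (1 - g1 a b)) * (∑ b ∈ C, (1 - g2 a b))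
        + (∑ b ∈ C, (1 - g1 b a)) * (∑ b ∈ C, (1 - g3 a b))
        + (∑ b ∈ C, (1 - g2 b a)) * (∑ b ∈ C, (1 - g3 b a))
        + 1 / 2 * ((∑ b ∈ C, g1 a b) * (n - ∑ b ∈ C, g1 a b)
          + (∑ b ∈ C, g1 b a) * (n - ∑ b ∈ C, g1 b a)
          + (∑ b ∈ C, g2 a b) * (n - ∑ b ∈ C, g2 a b)
          + (∑ b ∈ C, g2 b a) * (n - ∑ b ∈ C, g2 b a)
          + (∑ b ∈ C, g3 a b) * (n - ∑ b ∈ C, g3 a b)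
          + (∑ b ∈ C, g3 b a) * (n - ∑ b ∈ C, g3 b a)))
      = (∑ a ∈ C, (∑ b ∈ C, (1 - g1 a b)) * (∑ b ∈ C, (1 - g2 a b)))
        + (∑ a ∈ C, (∑ b ∈ C, (1 - g1 b a)) * (∑ b ∈ C, (1 - g3 a b)))
        + (∑ a ∈ C, (∑ b ∈ C, (1 - g2 b a)) * (∑ b ∈ C, (1 - g3 b a)))
        + 1 / 2 * ∑ a ∈ C, ((∑ b ∈ C, g1 a b) * (n - ∑ b ∈ C, g1 a b)
          + (∑ b ∈ C, g1 b a) * (n - ∑ b ∈ C, g1 b a)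
          + (∑ b ∈ C, g2 a b) * (n - ∑ b ∈ C, g2 a b)
          + (∑ b ∈ C, g2 b a) * (n - ∑ b ∈ C, g2 b a)
          + (∑ b ∈ C, g3 a b) * (n - ∑ b ∈ C, g3 a b)
          + (∑ b ∈ C, g3 b a) * (n - ∑ b ∈ C, g3 b a)) := by
    simp only [Finset.sum_add_distrib]
    rw [← Finset.mul_sum]
    simp only [Finset.sum_add_distrib]
  have mR : (∑ a ∈ C, (n / 2 * ((∑ b ∈ C, (1 - g1 a b)) + (∑ b ∈ C, (1 - g1 b a))
          + (∑ b ∈ C, (1 - g2 a b)) + (∑ b ∈ C, (1 - g2 b a))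
          + (∑ b ∈ C, (1 - g3 a b)) + (∑ b ∈ C, (1 - g3 b a)))))
      = n / 2 * ((∑ a ∈ C, ∑ b ∈ C, (1 - g1 a b)) + (∑ a ∈ C, ∑ b ∈ C, (1 - g1 b a))
          + (∑ a ∈ C, ∑ b ∈ C, (1 - g2 a b)) + (∑ a ∈ C, ∑ b ∈ C, (1 - g2 b a))
          + (∑ a ∈ C, ∑ b ∈ C, (1 - g3 a b)) + (∑ a ∈ C, ∑ b ∈ C, (1 - g3 b a))) := by
    rw [← Finset.mul_sum]
    simp only [Finset.sum_add_distrib]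
  rw [mL, mR] at master
  rw [split, T0, tri_T1 C g1, tri_T2 C g2, tri_T3 C g3, tri_T4 C g1 g2, tri_T5 C g1 g3,
    tri_T6 C g2 g3] at step1
  rw [← hc1, ← hc2, ← hc3] at master
  nlinarith [master, step1]

end Tri




/-- `e_{i,j}(a) = d_{i,j}(a)/n`. -/
noncomputable def Palette.eGood {α : Type} [DecidableEq α] (P : Palette α)
    (i j : Fin 3) (a : α) : ℝ :=
  (P.dGood i j a : ℝ) / (P.colors.card : ℝ)

set_option maxHeartbeats 1000000 in
/-- The density of any palette satisfies
`d(P) ≤ 1/4 + (1/(2n)) Σ_{a ∈ C} Σ_{i ≠ j} (e_{i,j}(a) − 1/2)²`. -/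
theorem density_le_quarter_add_sum {α : Type} [DecidableEq α] (P : Palette α) :
    P.density ≤ 1 / 4 + 1 / (2 * (P.colors.card : ℝ)) *
      ∑ a ∈ P.colors,
        ∑ p ∈ Finset.univ.filter (fun p : Fin 3 × Fin 3 => p.1 ≠ p.2),
          (P.eGood p.1 p.2 a - 1 / 2) ^ 2 := by
  classical
  set C : Finset α := P.colors with hC
  set n : ℝ := (C.card : ℝ) with hn
  have hn0 : (0:ℝ) < n := by
    rw [hn]; exact_mod_cast P.nonempty.card_pos
  have hind : ∀ (p : Prop) (_ : Decidable p), (0:ℝ) ≤ if p then 1 else 0 := by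
    intro p _; split <;> norm_num
  have hind1 : ∀ (p : Prop) (_ : Decidable p), (if p then (1:ℝ) else 0) ≤ 1 := by
    intro p _; split <;> norm_num
  -- the six-pair filter expansion
  have hfilter : ∀ (f : Fin 3 × Fin 3 → ℝ),
      (∑ p ∈ Finset.univ.filter (fun p : Fin 3 × Fin 3 => p.1 ≠ p.2), f p)
        = f (0,1) + f (0,2) + f (1,0) + f (1,2) + f (2,0) + f (2,1) := by
    intro f
    rw [Finset.sum_filter, ← Finset.univ_product_univ, Finset.sum_product]
    simp [Fin.sum_univ_three]
    ring
  have hcard6 : (Finset.univ.filter (fun p : Fin 3 × Fin 3 => p.1 ≠ p.2)).card = 6 := by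
    decide
  -- Good symmetry
  have hsymm : ∀ (i j : Fin 3) (a b : α), P.Good i j a b ↔ P.Good j i b a := by
    intro i j a b
    constructor <;> rintro ⟨t, ht, h1, h2⟩ <;> exact ⟨t, ht, h2, h1⟩
  -- dGood as a sum
  have hd : ∀ (i j : Fin 3) (a : α),
      (P.dGood i j a : ℝ) = ∑ b ∈ C, if P.Good i j a b then (1:ℝ) else 0 := by
    intro i j a
    rw [Palette.dGood, Finset.card_filter]
    push_cast
    rfl
  have hdT : ∀ (i j : Fin 3) (a : α),
      (P.dGood i j a : ℝ) = ∑ b ∈ C, if P.Good j i b a then (1:ℝ) else 0 := by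
    intro i j a
    rw [hd i j a]
    exact Finset.sum_congr rfl fun b _ => if_congr (hsymm i j a b) rfl rfl
  -- instantiate the key bound
  have key := tri_bound C
      (fun a b => if P.Good 0 1 a b then (1:ℝ) else 0)
      (fun a b => if P.Good 0 2 a b then (1:ℝ) else 0)
      (fun a b => if P.Good 1 2 a b then (1:ℝ) else 0)
      (fun a b => ⟨hind _ _, hind1 _ _⟩)
      (fun a b => ⟨hind _ _, hind1 _ _⟩)
      (fun a b => ⟨hind _ _, hind1 _ _⟩)
  beta_reduce at key
  -- |A| ≤ triangle sum
  have hA : (P.triples.card : ℝ)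
      ≤ ∑ a ∈ C, ∑ b ∈ C, ∑ c ∈ C,
        (if P.Good 0 1 a b then (1:ℝ) else 0) * (if P.Good 0 2 a c then (1:ℝ) else 0)
          * (if P.Good 1 2 b c then (1:ℝ) else 0) := by
    have e1 : (P.triples.card : ℝ)
        = ∑ t ∈ C ×ˢ C ×ˢ C, if t ∈ P.triples then (1:ℝ) else 0 := by
      rw [Finset.sum_ite_mem, Finset.inter_eq_right.mpr P.triples_sub,
        Finset.sum_const, nsmul_eq_mul, mul_one]
    rw [e1]
    simp only [Finset.sum_product]
    refine Finset.sum_le_sum fun a _ => Finset.sum_le_sum fun b _ =>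
      Finset.sum_le_sum fun c _ => ?_
    by_cases h : (a, b, c) ∈ P.triples
    · have G1 : P.Good 0 1 a b := ⟨(a,b,c), h, rfl, rfl⟩
      have G2 : P.Good 0 2 a c := ⟨(a,b,c), h, rfl, rfl⟩
      have G3 : P.Good 1 2 b c := ⟨(a,b,c), h, rfl, rfl⟩
      rw [if_pos h, if_pos G1, if_pos G2, if_pos G3]
      norm_num
    · rw [if_neg h]
      exact mul_nonneg (mul_nonneg (hind _ _) (hind _ _)) (hind _ _)
  -- rewrite the variance sum
  have hL : ∀ a ∈ C,
      (∑ p ∈ Finset.univ.filter (fun p : Fin 3 × Fin 3 => p.1 ≠ p.2),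
        (P.dGood p.1 p.2 a : ℝ) * (n - (P.dGood p.1 p.2 a : ℝ)))
      = ((∑ b ∈ C, if P.Good 0 1 a b then (1:ℝ) else 0)
            * (n - ∑ b ∈ C, if P.Good 0 1 a b then (1:ℝ) else 0)
        + (∑ b ∈ C, if P.Good 0 1 b a then (1:ℝ) else 0)
            * (n - ∑ b ∈ C, if P.Good 0 1 b a then (1:ℝ) else 0)
        + (∑ b ∈ C, if P.Good 0 2 a b then (1:ℝ) else 0)
            * (n - ∑ b ∈ C, if P.Good 0 2 a b then (1:ℝ) else 0)
        + (∑ b ∈ C, if P.Good 0 2 b a then (1:ℝ) else 0)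
            * (n - ∑ b ∈ C, if P.Good 0 2 b a then (1:ℝ) else 0)
        + (∑ b ∈ C, if P.Good 1 2 a b then (1:ℝ) else 0)
            * (n - ∑ b ∈ C, if P.Good 1 2 a b then (1:ℝ) else 0)
        + (∑ b ∈ C, if P.Good 1 2 b a then (1:ℝ) else 0)
            * (n - ∑ b ∈ C, if P.Good 1 2 b a then (1:ℝ) else 0)) := by
    intro a _
    rw [hfilter]
    rw [hd 0 1 a, hd 0 2 a, hdT 1 0 a, hd 1 2 a, hdT 2 0 a, hdT 2 1 a]
    ring
  have haux : ((P.colors.card : ℕ) : ℝ) = n := by rw [hn, hC]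
  rw [← hn] at key
  set L : ℝ := ∑ a ∈ C, ∑ p ∈ Finset.univ.filter (fun p : Fin 3 × Fin 3 => p.1 ≠ p.2),
      (P.dGood p.1 p.2 a : ℝ) * (n - (P.dGood p.1 p.2 a : ℝ)) with hLdef
  have main : (P.triples.card : ℝ) + 1 / 2 * L ≤ n ^ 3 := by
    have e2 : L = ∑ a ∈ C,
        ((∑ b ∈ C, if P.Good 0 1 a b then (1:ℝ) else 0)
            * (n - ∑ b ∈ C, if P.Good 0 1 a b then (1:ℝ) else 0)
          + (∑ b ∈ C, if P.Good 0 1 b a then (1:ℝ) else 0)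
              * (n - ∑ b ∈ C, if P.Good 0 1 b a then (1:ℝ) else 0)
          + (∑ b ∈ C, if P.Good 0 2 a b then (1:ℝ) else 0)
              * (n - ∑ b ∈ C, if P.Good 0 2 a b then (1:ℝ) else 0)
          + (∑ b ∈ C, if P.Good 0 2 b a then (1:ℝ) else 0)
              * (n - ∑ b ∈ C, if P.Good 0 2 b a then (1:ℝ) else 0)
          + (∑ b ∈ C, if P.Good 1 2 a b then (1:ℝ) else 0)
              * (n - ∑ b ∈ C, if P.Good 1 2 a b then (1:ℝ) else 0)
          + (∑ b ∈ C, if P.Good 1 2 b a then (1:ℝ) else 0)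
              * (n - ∑ b ∈ C, if P.Good 1 2 b a then (1:ℝ) else 0)) :=
      Finset.sum_congr rfl hL
    rw [e2]
    linarith [key, hA]
  -- convert the e-sum
  have hE : ∀ a ∈ C, (∑ p ∈ Finset.univ.filter (fun p : Fin 3 × Fin 3 => p.1 ≠ p.2),
      (P.eGood p.1 p.2 a - 1 / 2) ^ 2)
      = 3 / 2 - 1 / n ^ 2 * ∑ p ∈ Finset.univ.filter (fun p : Fin 3 × Fin 3 => p.1 ≠ p.2),
          (P.dGood p.1 p.2 a : ℝ) * (n - (P.dGood p.1 p.2 a : ℝ)) := by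
    intro a _
    have ht : ∀ p ∈ Finset.univ.filter (fun p : Fin 3 × Fin 3 => p.1 ≠ p.2),
        (P.eGood p.1 p.2 a - 1 / 2) ^ 2
          = 1 / 4 - 1 / n ^ 2 * ((P.dGood p.1 p.2 a : ℝ) * (n - (P.dGood p.1 p.2 a : ℝ))) := by
      intro p _
      rw [Palette.eGood, haux]
      field_simp
      ring
    rw [Finset.sum_congr rfl ht, Finset.sum_sub_distrib, Finset.sum_const, hcard6,
      ← Finset.mul_sum]
    norm_num
  have hglobal : (∑ a ∈ C, ∑ p ∈ Finset.univ.filter (fun p : Fin 3 × Fin 3 => p.1 ≠ p.2),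
      (P.eGood p.1 p.2 a - 1 / 2) ^ 2) = 3 / 2 * n - 1 / n ^ 2 * L := by
    rw [Finset.sum_congr rfl hE, Finset.sum_sub_distrib, Finset.sum_const, ← Finset.mul_sum,
      hLdef, nsmul_eq_mul, ← hn]
    ring
  rw [Palette.density, haux, hglobal, div_le_iff₀ (pow_pos hn0 3)]
  have hid : (1 / 4 + 1 / (2 * n) * (3 / 2 * n - 1 / n ^ 2 * L)) * n ^ 3
      = n ^ 3 - 1 / 2 * L := by
    field_simp
    ring
  linarith [main, hid]
end

section
/- Let P = (C, A) be a palette, let k = s + t with s, t ≥ 0, and suppose there exist colors ℓ₁, …, ℓ_s ∈ C and r₁, …, r_t ∈ C such that: (i) for all 1 ≤ i < j ≤ s there exists c ∈ C with (c, ℓ_i, ℓ_j) ∈ A; (ii) for all 1 ≤ i ≤ s and 1 ≤ j ≤ t there exists c ∈ C with (ℓ_i, c, r_j) ∈ A; and (iii) for all 1 ≤ i < j ≤ t there exists c ∈ C with (r_i, r_j, c) ∈ A. Then the k-star S_k admits P. -/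
/-- A 3-graph, given by its edge set `E` on vertex type `V`, admits the palette `P`
if there are a linear (strict total) order on the vertices and a coloring of the
unordered pairs of vertices such that every edge, listed in increasing order,
receives an admissible triple. -/
def Palette.Admits {α : Type} [DecidableEq α] {V : Type} [DecidableEq V]
    (P : Palette α) (E : Set (Finset V)) : Prop :=
  ∃ r : V → V → Prop, IsStrictTotalOrder V r ∧
    ∃ φ : Sym2 V → α, (∀ p, φ p ∈ P.colors) ∧
      ∀ u v w : V, r u v → r v w → ({u, v, w} : Finset V) ∈ E →
        (φ s(u, v), φ s(u, w), φ s(v, w)) ∈ P.triples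

section StarAux

variable {α : Type} [DecidableEq α]

/-- A default color. -/
noncomputable def pdef (P : Palette α) : α := P.nonempty.choose

lemma pdef_mem (P : Palette α) : pdef P ∈ P.colors := P.nonempty.choose_spec

open Classical in
/-- Pick a color satisfying `Q` if possible, else the default color. -/
noncomputable def pick (P : Palette α) (Q : α → Prop) : α :=
  if h : ∃ c ∈ P.colors, Q c then h.choose else pdef P

lemma pick_mem (P : Palette α) (Q : α → Prop) : pick P Q ∈ P.colors := by
  classical
  unfold pick
  split
  · exact (‹∃ c ∈ P.colors, Q c›).choose_spec.1
  · exact pdef_mem P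

lemma pick_spec (P : Palette α) (Q : α → Prop) (h : ∃ c ∈ P.colors, Q c) :
    Q (pick P Q) := by
  classical
  unfold pick
  rw [dif_pos h]
  exact h.choose_spec.2

/-- Extend a tuple of colors to a function on ℕ. -/
noncomputable def Lc (P : Palette α) {s : ℕ} (ℓ : Fin s → α) (n : ℕ) : α :=
  if h : n < s then ℓ ⟨n, h⟩ else pdef P

lemma Lc_mem (P : Palette α) {s : ℕ} (ℓ : Fin s → α) (hℓ : ∀ i, ℓ i ∈ P.colors) (n : ℕ) :
    Lc P ℓ n ∈ P.colors := by
  unfold Lc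
  split
  · exact hℓ _
  · exact pdef_mem P

lemma Lc_eq (P : Palette α) {s : ℕ} (ℓ : Fin s → α) (n : ℕ) (h : n < s) :
    Lc P ℓ n = ℓ ⟨n, h⟩ := dif_pos h

/-- The position of a vertex: the center `0` goes to slot `s`, the first `s`
leaves before it, the rest after it. -/
def vpos (s : ℕ) {n : ℕ} (x : Fin n) : ℕ :=
  if x.val = 0 then s else if x.val ≤ s then x.val - 1 else x.val

lemma vpos_inj (s : ℕ) {n : ℕ} {x y : Fin n} (h : vpos s x = vpos s y) : x = y := by
  apply Fin.ext
  unfold vpos at h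
  split_ifs at h <;> omega

/-- The pair coloring, for pairs `(a, b)` with `vpos s a ≤ vpos s b`. -/
noncomputable def gc (P : Palette α) {s t : ℕ} (ℓ : Fin s → α) (r : Fin t → α)
    (a b : Fin (s + t + 1)) : α :=
  if b.val = 0 then Lc P ℓ (a.val - 1)
  else if a.val = 0 then Lc P r (b.val - 1 - s)
  else if b.val ≤ s then
    pick P (fun c => (c, Lc P ℓ (a.val - 1), Lc P ℓ (b.val - 1)) ∈ P.triples)
  else if a.val ≤ s then
    pick P (fun c => (Lc P ℓ (a.val - 1), c, Lc P r (b.val - 1 - s)) ∈ P.triples)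
  else
    pick P (fun c => (Lc P r (a.val - 1 - s), Lc P r (b.val - 1 - s), c) ∈ P.triples)

lemma gc_mem (P : Palette α) {s t : ℕ} (ℓ : Fin s → α) (r : Fin t → α)
    (hℓ : ∀ i, ℓ i ∈ P.colors) (hr : ∀ i, r i ∈ P.colors)
    (a b : Fin (s + t + 1)) : gc P ℓ r a b ∈ P.colors := by
  unfold gc
  split_ifs
  · exact Lc_mem P ℓ hℓ _
  · exact Lc_mem P r hr _
  · exact pick_mem P _
  · exact pick_mem P _
  · exact pick_mem P _

end StarAux

/-- If there are colors `ℓ₁, …, ℓ_s` and `r₁, …, r_t` such that every pair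
`(ℓ_i, ℓ_j)` (`i < j`) extends to an admissible triple `(c, ℓ_i, ℓ_j)`, every pair
`(ℓ_i, r_j)` extends to an admissible triple `(ℓ_i, c, r_j)`, and every pair
`(r_i, r_j)` (`i < j`) extends to an admissible triple `(r_i, r_j, c)`, then the
`(s + t)`-star admits the palette. -/
theorem star_admits_of_tournament {α : Type} [DecidableEq α] (P : Palette α)
    (s t : ℕ) (ℓ : Fin s → α) (r : Fin t → α)
    (hℓ : ∀ i, ℓ i ∈ P.colors) (hr : ∀ i, r i ∈ P.colors)
    (h1 : ∀ i j : Fin s, i < j → ∃ c ∈ P.colors, (c, ℓ i, ℓ j) ∈ P.triples)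
    (h2 : ∀ (i : Fin s) (j : Fin t), ∃ c ∈ P.colors, (ℓ i, c, r j) ∈ P.triples)
    (h3 : ∀ i j : Fin t, i < j → ∃ c ∈ P.colors, (r i, r j, c) ∈ P.triples) :
    P.Admits (starEdges (s + t)) := by
  classical
  refine ⟨fun a b => vpos s a < vpos s b, ?_, ?_⟩
  · have htri : IsTrichotomous (Fin (s + t + 1)) (fun a b => vpos s a < vpos s b) := by
      constructor
      intro a b
      rcases Nat.lt_trichotomy (vpos s a) (vpos s b) with h | h | h
      · exact fun h' _ => absurd h h'
      · exact fun _ _ => vpos_inj s h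
      · exact fun _ h' => absurd h h'
    have hirr : IsIrrefl (Fin (s + t + 1)) (fun a b => vpos s a < vpos s b) :=
      ⟨fun a => lt_irrefl _⟩
    have htr : IsTrans (Fin (s + t + 1)) (fun a b => vpos s a < vpos s b) :=
      ⟨fun a b c hab hbc => lt_trans hab hbc⟩
    exact { toTrichotomous := htri, toIsStrictOrder := { toIrrefl := hirr, toIsTrans := htr } }
  · have hsymm : ∀ a b : Fin (s + t + 1),
        (if vpos s a ≤ vpos s b then gc P ℓ r a b else gc P ℓ r b a) =
        (if vpos s b ≤ vpos s a then gc P ℓ r b a else gc P ℓ r a b) := by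
      intro a b
      by_cases h1' : vpos s a ≤ vpos s b <;> by_cases h2' : vpos s b ≤ vpos s a
      · have : a = b := vpos_inj s (le_antisymm h1' h2')
        subst this
        simp
      · rw [if_pos h1', if_neg h2']
      · rw [if_neg h1', if_pos h2']
      · omega
    refine ⟨Sym2.lift ⟨fun a b => if vpos s a ≤ vpos s b then gc P ℓ r a b else gc P ℓ r b a,
      hsymm⟩, ?_, ?_⟩
    · intro p
      induction p using Sym2.ind with
      | _ a b =>
        simp only [Sym2.lift_mk]
        split
        · exact gc_mem P ℓ r hℓ hr a b
        · exact gc_mem P ℓ r hℓ hr b a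
    · intro u v w huv hvw he
      obtain ⟨i, j, hij, heq⟩ := he
      have h0 : (0 : Fin (s + t + 1)) ∈ ({u, v, w} : Finset (Fin (s + t + 1))) := by
        rw [heq]; simp
      simp only [Finset.mem_insert, Finset.mem_singleton] at h0
      have huw : vpos s u < vpos s w := lt_trans huv hvw
      simp only [Sym2.lift_mk, if_pos (le_of_lt huv), if_pos (le_of_lt hvw),
        if_pos (le_of_lt huw)]
      have hval0 : (0 : Fin (s + t + 1)).val = 0 := rfl
      rcases h0 with h0 | h0 | h0
      · -- u = 0 : both v, w are right leaves
        subst h0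
        have hv : s < v.val ∧ v.val < s + t + 1 := by
          constructor
          · unfold vpos at huv; rw [hval0] at huv; split_ifs at huv <;> omega
          · exact v.isLt
        have hw : s < w.val ∧ w.val < s + t + 1 := by
          constructor
          · unfold vpos at huw; rw [hval0] at huw; split_ifs at huw <;> omega
          · exact w.isLt
        have hvw' : v.val < w.val := by
          unfold vpos at hvw; split_ifs at hvw <;> omega
        have e1 : gc P ℓ r 0 v = Lc P r (v.val - 1 - s) := by
          unfold gc; rw [if_neg (by omega), if_pos hval0]
        have e2 : gc P ℓ r 0 w = Lc P r (w.val - 1 - s) := by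
          unfold gc; rw [if_neg (by omega), if_pos hval0]
        have e3 : gc P ℓ r v w =
            pick P (fun c => (Lc P r (v.val - 1 - s), Lc P r (w.val - 1 - s), c) ∈ P.triples) := by
          unfold gc; rw [if_neg (by omega), if_neg (by omega), if_neg (by omega),
            if_neg (by omega)]
        rw [e1, e2, e3]
        have hn : v.val - 1 - s < t := by omega
        have hm : w.val - 1 - s < t := by omega
        have hex : ∃ c ∈ P.colors,
            (Lc P r (v.val - 1 - s), Lc P r (w.val - 1 - s), c) ∈ P.triples := by
          rw [Lc_eq P r _ hn, Lc_eq P r _ hm]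
          exact h3 ⟨_, hn⟩ ⟨_, hm⟩ (by simp [Fin.lt_def]; omega)
        exact pick_spec P _ hex
      · -- v = 0 : u left leaf, w right leaf
        subst h0
        have hu : 0 < u.val ∧ u.val ≤ s := by
          unfold vpos at huv; rw [hval0] at huv; split_ifs at huv <;> omega
        have hw : s < w.val ∧ w.val < s + t + 1 := by
          constructor
          · unfold vpos at hvw; rw [hval0] at hvw; split_ifs at hvw <;> omega
          · exact w.isLt
        have e1 : gc P ℓ r u 0 = Lc P ℓ (u.val - 1) := by
          unfold gc; rw [if_pos hval0]
        have e2 : gc P ℓ r u w =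
            pick P (fun c => (Lc P ℓ (u.val - 1), c, Lc P r (w.val - 1 - s)) ∈ P.triples) := by
          unfold gc; rw [if_neg (by omega), if_neg (by omega), if_neg (by omega),
            if_pos (by omega)]
        have e3 : gc P ℓ r 0 w = Lc P r (w.val - 1 - s) := by
          unfold gc; rw [if_neg (by omega), if_pos hval0]
        rw [e1, e2, e3]
        have hn : u.val - 1 < s := by omega
        have hm : w.val - 1 - s < t := by omega
        have hex : ∃ c ∈ P.colors,
            (Lc P ℓ (u.val - 1), c, Lc P r (w.val - 1 - s)) ∈ P.triples := by
          rw [Lc_eq P ℓ _ hn, Lc_eq P r _ hm]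
          exact h2 ⟨_, hn⟩ ⟨_, hm⟩
        exact pick_spec P _ hex
      · -- w = 0 : both u, v are left leaves
        subst h0
        have hu : 0 < u.val ∧ u.val ≤ s := by
          unfold vpos at huw; rw [hval0] at huw; split_ifs at huw <;> omega
        have hv : 0 < v.val ∧ v.val ≤ s := by
          unfold vpos at hvw; rw [hval0] at hvw; split_ifs at hvw <;> omega
        have huv' : u.val < v.val := by
          unfold vpos at huv; split_ifs at huv <;> omega
        have e1 : gc P ℓ r u v =
            pick P (fun c => (c, Lc P ℓ (u.val - 1), Lc P ℓ (v.val - 1)) ∈ P.triples) := by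
          unfold gc; rw [if_neg (by omega), if_neg (by omega), if_pos (by omega)]
        have e2 : gc P ℓ r u 0 = Lc P ℓ (u.val - 1) := by
          unfold gc; rw [if_pos hval0]
        have e3 : gc P ℓ r v 0 = Lc P ℓ (v.val - 1) := by
          unfold gc; rw [if_pos hval0]
        rw [e1, e2, e3]
        have hn : u.val - 1 < s := by omega
        have hm : v.val - 1 < s := by omega
        have hex : ∃ c ∈ P.colors,
            (c, Lc P ℓ (u.val - 1), Lc P ℓ (v.val - 1)) ∈ P.triples := by
          rw [Lc_eq P ℓ _ hn, Lc_eq P ℓ _ hm]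
          exact h1 ⟨_, hn⟩ ⟨_, hm⟩ (by simp [Fin.lt_def]; omega)
        exact pick_spec P _ hex
end

section
/- Let k ≥ 2 be an integer and let H be a digraph on a finite vertex set V with |V| = n, i.e., an irreflexive binary relation E on V. Suppose H contains no transitive tournament on k vertices, that is, there do not exist distinct vertices w₁, …, w_k with an arc from w_i to w_j for all 1 ≤ i < j ≤ k. For each vertex v let m(v) = max(d⁺(v), d⁻(v)), where d⁺(v) = |{w : (v,w) ∈ E}| and d⁻(v) = |{w : (w,v) ∈ E}|. Then Σ_{v ∈ V} 1/(n − m(v)) ≤ k − 1. -/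
open Finset

lemma restrict_no_tt {V : Type} (k : ℕ) (E : V → V → Prop) (v : V) (N : Finset V)
    (hvN : v ∉ N)
    (hdir : (∀ u ∈ N, E v u) ∨ (∀ u ∈ N, E u v))
    (hno : ¬ ∃ w : Fin (k+1) → V, Function.Injective w ∧
      ∀ i j : Fin (k+1), i < j → E (w i) (w j)) :
    ¬ ∃ w : Fin k → {u // u ∈ N}, Function.Injective w ∧
      ∀ i j : Fin k, i < j → E (w i).1 (w j).1 := by
  rintro ⟨w, hwinj, hwE⟩
  rcases hdir with hd | hd
  · refine hno ⟨Fin.cases v (fun i => (w i).1), ?_, ?_⟩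
    · intro i j h
      induction i using Fin.cases with
      | zero =>
        induction j using Fin.cases with
        | zero => rfl
        | succ j =>
          simp only [Fin.cases_zero, Fin.cases_succ] at h
          exact absurd (h ▸ (w j).2) hvN
      | succ i =>
        induction j using Fin.cases with
        | zero =>
          simp only [Fin.cases_zero, Fin.cases_succ] at h
          exact absurd (h ▸ (w i).2) hvN
        | succ j =>
          simp only [Fin.cases_succ] at h
          exact congrArg Fin.succ (hwinj (Subtype.ext h))
    · intro i j hij
      induction j using Fin.cases with
      | zero => exact absurd hij (Fin.not_lt_zero i).elim
      | succ j =>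
        induction i using Fin.cases with
        | zero =>
          simp only [Fin.cases_zero, Fin.cases_succ]
          exact hd _ (w j).2
        | succ i =>
          simp only [Fin.cases_succ]
          exact hwE i j (by simpa [Fin.succ_lt_succ_iff] using hij)
  · refine hno ⟨Fin.lastCases v (fun i => (w i).1), ?_, ?_⟩
    · intro i j h
      induction i using Fin.lastCases with
      | last =>
        induction j using Fin.lastCases with
        | last => rfl
        | cast j =>
          simp only [Fin.lastCases_last, Fin.lastCases_castSucc] at h
          exact absurd (h ▸ (w j).2) hvN
      | cast i =>
        induction j using Fin.lastCases with
        | last =>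
          simp only [Fin.lastCases_last, Fin.lastCases_castSucc] at h
          exact absurd (h ▸ (w i).2) hvN
        | cast j =>
          simp only [Fin.lastCases_castSucc] at h
          exact congrArg Fin.castSucc (hwinj (Subtype.ext h))
    · intro i j hij
      induction i using Fin.lastCases with
      | last => exact absurd hij (Fin.not_lt.mpr (Fin.le_last j))
      | cast i =>
        induction j using Fin.lastCases with
        | last =>
          simp only [Fin.lastCases_last, Fin.lastCases_castSucc]
          exact hd _ (w i).2
        | cast j =>
          simp only [Fin.lastCases_castSucc]
          exact hwE i j (by simpa [Fin.castSucc_lt_castSucc_iff] using hij)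

section Helpers
variable {V : Type} [Fintype V] [DecidableEq V]

def mdeg (E : V → V → Prop) [DecidableRel E] (v : V) : ℕ :=
  max ((univ.filter fun u => E v u).card) ((univ.filter fun u => E u v).card)

instance subRel {N : Finset V} (E : V → V → Prop) [DecidableRel E] :
    DecidableRel (fun a b : {x // x ∈ N} => E a.1 b.1) :=
  fun a b => inferInstanceAs (Decidable (E a.1 b.1))

lemma mdeg_lt (E : V → V → Prop) [DecidableRel E] (hirr : ∀ v, ¬ E v v) (v : V) :
    mdeg E v < Fintype.card V := by
  have h : ∀ (p : V → Prop) [DecidablePred p], ¬ p v →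
      (univ.filter p).card ≤ Fintype.card V - 1 := by
    intro p _ hp
    have hs : univ.filter p ⊆ univ.erase v := by
      intro u hu
      simp only [mem_filter, mem_univ, true_and] at hu
      exact mem_erase.2 ⟨fun h => hp (h ▸ hu), mem_univ u⟩
    calc (univ.filter p).card ≤ (univ.erase v).card := card_le_card hs
      _ = Fintype.card V - 1 := by rw [card_erase_of_mem (mem_univ v), card_univ]
  have hpos : 0 < Fintype.card V := Fintype.card_pos_iff.2 ⟨v⟩
  have h1 := h (fun u => E v u) (hirr v)
  have h2 := h (fun u => E u v) (hirr v)
  unfold mdeg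
  omega

lemma card_filter_le_aux (N : Finset V) (p : V → Prop) [DecidablePred p] :
    (univ.filter p).card ≤ (N.filter p).card + (Fintype.card V - N.card) := by
  have hsub : univ.filter p ⊆ N.filter p ∪ Nᶜ := by
    intro x hx
    simp only [mem_filter, mem_univ, true_and] at hx
    by_cases h : x ∈ N
    · exact mem_union_left _ (mem_filter.2 ⟨h, hx⟩)
    · exact mem_union_right _ (mem_compl.2 h)
  calc (univ.filter p).card ≤ (N.filter p ∪ Nᶜ).card := card_le_card hsub
    _ ≤ (N.filter p).card + Nᶜ.card := card_union_le _ _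
    _ = _ := by rw [card_compl]

lemma filter_subtype_card (N : Finset V) (p : V → Prop) [DecidablePred p] :
    (Finset.univ.filter fun u : {x // x ∈ N} => p u.1).card = (N.filter p).card := by
  rw [univ_eq_attach, filter_attach, card_map, card_attach]

lemma step_main (k : ℕ) (E : V → V → Prop) [DecidableRel E] (hirr : ∀ v, ¬ E v v)
    (v₀ : V) (hmax : ∀ u : V, mdeg E u ≤ mdeg E v₀)
    (N : Finset V) (hNcard : N.card = mdeg E v₀)
    (hsub : ∑ u : {x // x ∈ N}, (1 : ℝ) /
        ((Fintype.card {x // x ∈ N} : ℝ) -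
          (mdeg (fun a b : {x // x ∈ N} => E a.1 b.1) u : ℕ)) ≤ (k : ℝ) - 1) :
    ∑ v : V, (1 : ℝ) / ((Fintype.card V : ℝ) - (mdeg E v : ℕ)) ≤ (k : ℝ) := by
  classical
  set n := Fintype.card V with hn
  have hlt : ∀ v, mdeg E v < n := mdeg_lt E hirr
  have hNle : N.card ≤ n := (card_le_univ N).trans_eq card_univ
  have hpos0 : (0 : ℝ) < (n : ℝ) - (mdeg E v₀ : ℕ) :=
    sub_pos.2 (by exact_mod_cast hlt v₀)
  have hA : ∑ v ∈ Nᶜ, (1 : ℝ) / ((n : ℝ) - (mdeg E v : ℕ)) ≤ 1 := by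
    have hterm : ∀ v ∈ Nᶜ, (1 : ℝ) / ((n : ℝ) - (mdeg E v : ℕ)) ≤
        1 / ((n : ℝ) - (mdeg E v₀ : ℕ)) := by
      intro v _
      apply one_div_le_one_div_of_le hpos0
      have : (mdeg E v : ℝ) ≤ (mdeg E v₀ : ℝ) := by exact_mod_cast hmax v
      linarith
    calc ∑ v ∈ Nᶜ, (1 : ℝ) / ((n : ℝ) - (mdeg E v : ℕ))
        ≤ ∑ _v ∈ Nᶜ, 1 / ((n : ℝ) - (mdeg E v₀ : ℕ)) := sum_le_sum hterm
      _ = (Nᶜ.card : ℝ) * (1 / ((n : ℝ) - (mdeg E v₀ : ℕ))) := by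
          rw [sum_const, nsmul_eq_mul]
      _ = 1 := by
          rw [card_compl, hNcard, ← hn, Nat.cast_sub (le_of_lt (hlt v₀)), mul_one_div,
            div_self (ne_of_gt hpos0)]
  have hB : ∑ v ∈ N, (1 : ℝ) / ((n : ℝ) - (mdeg E v : ℕ)) ≤ (k : ℝ) - 1 := by
    rw [← Finset.sum_coe_sort N (fun v => (1 : ℝ) / ((n : ℝ) - (mdeg E v : ℕ)))]
    refine le_trans (Finset.sum_le_sum ?_) hsub
    intro u _
    have hirr' : ∀ a : {x // x ∈ N}, ¬ E a.1 a.1 := fun a => hirr a.1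
    have hcard : Fintype.card {x // x ∈ N} = N.card := Fintype.card_coe N
    have hm' : mdeg (fun a b : {x // x ∈ N} => E a.1 b.1) u < N.card := by
      have := mdeg_lt (fun a b : {x // x ∈ N} => E a.1 b.1) hirr' u
      omega
    have hrel : mdeg E u.1 ≤ mdeg (fun a b : {x // x ∈ N} => E a.1 b.1) u + (n - N.card) := by
      have o1 := card_filter_le_aux N (fun w => E u.1 w)
      have i1 := card_filter_le_aux N (fun w => E w u.1)
      have o2 := filter_subtype_card N (fun w => E u.1 w)
      have i2 := filter_subtype_card N (fun w => E w u.1)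
      unfold mdeg
      rw [o2, i2]
      rw [← hn] at o1 i1
      exact max_le (o1.trans (Nat.add_le_add_right (Nat.le_max_left _ _) _))
        (i1.trans (Nat.add_le_add_right (Nat.le_max_right _ _) _))
    have hposN : (0 : ℝ) < (Fintype.card {x // x ∈ N} : ℝ) -
        (mdeg (fun a b : {x // x ∈ N} => E a.1 b.1) u : ℕ) := by
      rw [hcard]; exact sub_pos.2 (by exact_mod_cast hm')
    apply one_div_le_one_div_of_le hposN
    rw [hcard]
    have h1 : (mdeg E u.1 : ℝ) ≤
        (mdeg (fun a b : {x // x ∈ N} => E a.1 b.1) u : ℝ) + ((n - N.card : ℕ) : ℝ) := by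
      exact_mod_cast hrel
    rw [Nat.cast_sub hNle] at h1
    linarith
  have hsplit := Finset.sum_add_sum_compl N (fun v => (1 : ℝ) / ((n : ℝ) - (mdeg E v : ℕ)))
  rw [← hsplit]
  linarith
end Helpers
theorem aux_cw (k : ℕ) (hk : 2 ≤ k) :
    ∀ (V : Type) [Fintype V] [DecidableEq V] (E : V → V → Prop) [DecidableRel E],
      (∀ v, ¬ E v v) →
      (¬ ∃ w : Fin k → V, Function.Injective w ∧ ∀ i j : Fin k, i < j → E (w i) (w j)) →
      ∑ v : V, (1 : ℝ) / ((Fintype.card V : ℝ) - (mdeg E v : ℕ)) ≤ (k : ℝ) - 1 := by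
  induction k, hk using Nat.le_induction with
  | base =>
    intro V _ _ E _ hirr hno
    have hE : ∀ a b, ¬ E a b := by
      intro a b hab
      have hab' : a ≠ b := fun h => hirr a (h ▸ hab)
      refine hno ⟨![a, b], ?_, ?_⟩
      · intro i j h
        fin_cases i <;> fin_cases j <;> simp_all
      · intro i j hij
        fin_cases i <;> fin_cases j <;>
          first
          | exact absurd hij (by decide)
          | simpa using hab
    have hm : ∀ v : V, mdeg E v = 0 := by
      intro v
      unfold mdeg
      rw [filter_false_of_mem (fun u _ => hE v u), filter_false_of_mem (fun u _ => hE u v)]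
      simp
    rcases Nat.eq_zero_or_pos (Fintype.card V) with h0 | hpos
    · have : IsEmpty V := Fintype.card_eq_zero_iff.1 h0
      rw [Finset.univ_eq_empty, Finset.sum_empty]
      norm_num
    · have : ∑ v : V, (1 : ℝ) / ((Fintype.card V : ℝ) - (mdeg E v : ℕ)) =
          ∑ _v : V, (1 : ℝ) / (Fintype.card V : ℝ) := by
        apply Finset.sum_congr rfl
        intro v _
        rw [hm v]
        norm_num
      rw [this, Finset.sum_const, card_univ, nsmul_eq_mul, mul_one_div,
        div_self (by exact_mod_cast hpos.ne' : (Fintype.card V : ℝ) ≠ 0)]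
      norm_num
  | succ k hk ih =>
    intro V _ _ E _ hirr hno
    rcases isEmpty_or_nonempty V with hV | hV
    · rw [Finset.univ_eq_empty, Finset.sum_empty]
      have : (2 : ℝ) ≤ (k : ℝ) := by exact_mod_cast hk
      push_cast
      linarith
    · obtain ⟨v₀, -, hmax'⟩ := Finset.exists_max_image univ (mdeg E) univ_nonempty
      have hmax : ∀ u : V, mdeg E u ≤ mdeg E v₀ := fun u => hmax' u (mem_univ u)
      rcases le_total ((univ.filter fun u => E v₀ u).card)
          ((univ.filter fun u => E u v₀).card) with hle | hle
      · set N : Finset V := univ.filter fun u => E u v₀ with hNdef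
        have hvN : v₀ ∉ N := by simp [hNdef, hirr v₀]
        have hNcard : N.card = mdeg E v₀ := by
          rw [hNdef]
          exact (max_eq_right hle).symm
        have hnott := restrict_no_tt k E v₀ N hvN
          (Or.inr (fun u hu => (mem_filter.1 hu).2)) hno
        have hirr' : ∀ a : {x // x ∈ N}, ¬ E a.1 a.1 := fun a => hirr a.1
        have hsub := ih {x // x ∈ N} (fun a b => E a.1 b.1) hirr' hnott
        have := step_main k E hirr v₀ hmax N hNcard hsub
        push_cast
        linarith
      · set N : Finset V := univ.filter fun u => E v₀ u with hNdef
        have hvN : v₀ ∉ N := by simp [hNdef, hirr v₀]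
        have hNcard : N.card = mdeg E v₀ := by
          rw [hNdef]
          exact (max_eq_left hle).symm
        have hnott := restrict_no_tt k E v₀ N hvN
          (Or.inl (fun u hu => (mem_filter.1 hu).2)) hno
        have hirr' : ∀ a : {x // x ∈ N}, ¬ E a.1 a.1 := fun a => hirr a.1
        have hsub := ih {x // x ∈ N} (fun a b => E a.1 b.1) hirr' hnott
        have := step_main k E hirr v₀ hmax N hNcard hsub
        push_cast
        linarith

/-- Caro–Wei-type bound for digraphs: if a digraph (an irreflexive relation `E`
on a finite vertex set `V` of size `n`) contains no transitive tournament on `k`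
vertices, then `Σ_v 1/(n − m(v)) ≤ k − 1`, where `m(v)` is the maximum of the
out-degree and the in-degree of `v`. -/
theorem digraph_caro_wei {V : Type} [Fintype V] [DecidableEq V]
    (k : ℕ) (hk : 2 ≤ k) (E : V → V → Prop) [DecidableRel E]
    (hirr : ∀ v, ¬ E v v)
    (hno : ¬ ∃ w : Fin k → V, Function.Injective w ∧
      ∀ i j : Fin k, i < j → E (w i) (w j)) :
    ∑ v : V, (1 : ℝ) /
        ((Fintype.card V : ℝ) -
          (max ((Finset.univ.filter fun u => E v u).card)
               ((Finset.univ.filter fun u => E u v).card) : ℕ)) ≤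
      (k : ℝ) - 1 := by
  exact aux_cw k hk V E hirr hno
end

section
/- Let k ≥ 4 be an integer and define f₁(x) = 5/x² − (k+7)/((k−1)x) + 4/(k−1)² + 1/4. Then for every real number x ≥ 5(k−1)/(k−3), one has f₁(x) ≤ (k−3)x/(k−1)³ + (k² − 10k + 21)/(2k−2)². -/
/-- Tangent-type local inequality for
`f₁(x) = 5/x² − (k+7)/((k−1)x) + 4/(k−1)² + 1/4`: for all `x ≥ 5(k−1)/(k−3)`,
`f₁(x) ≤ (k−3)x/(k−1)³ + (k² − 10k + 21)/(2k−2)²`. -/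
theorem f1_tangent_bound (k : ℕ) (hk : 4 ≤ k) (x : ℝ)
    (hx : 5 * ((k : ℝ) - 1) / ((k : ℝ) - 3) ≤ x) :
    5 / x ^ 2 - ((k : ℝ) + 7) / (((k : ℝ) - 1) * x) + 4 / ((k : ℝ) - 1) ^ 2 + 1 / 4 ≤
      ((k : ℝ) - 3) * x / ((k : ℝ) - 1) ^ 3 +
      ((k : ℝ) ^ 2 - 10 * k + 21) / (2 * (k : ℝ) - 2) ^ 2 := by
  set c : ℝ := (k : ℝ) with hc
  have hc4 : (4 : ℝ) ≤ c := by rw [hc]; exact_mod_cast hk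
  have h3 : 0 < c - 3 := by linarith
  have h1 : 0 < c - 1 := by linarith
  have hxpos : 0 < x :=
    lt_of_lt_of_le (div_pos (by linarith) h3) hx
  have hx' : 5 * (c - 1) ≤ (c - 3) * x := by
    rw [div_le_iff₀ h3] at hx; linarith
  have key : ((c - 3) * x / (c - 1) ^ 3 + (c ^ 2 - 10 * c + 21) / (2 * c - 2) ^ 2) -
      (5 / x ^ 2 - (c + 7) / ((c - 1) * x) + 4 / (c - 1) ^ 2 + 1 / 4) =
      ((c - 3) * x - 5 * (c - 1)) * (x - (c - 1)) ^ 2 / (x ^ 2 * (c - 1) ^ 3) := by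
    have hx0 : x ≠ 0 := ne_of_gt hxpos
    have h1' : c - 1 ≠ 0 := ne_of_gt h1
    have h2 : 2 * c - 2 ≠ 0 := by intro h; apply h1'; linarith
    field_simp
    ring
  have hnum : 0 ≤ ((c - 3) * x - 5 * (c - 1)) * (x - (c - 1)) ^ 2 :=
    mul_nonneg (by linarith) (sq_nonneg _)
  have hden : 0 < x ^ 2 * (c - 1) ^ 3 := by positivity
  nlinarith [div_nonneg hnum hden.le, key]
end
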